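/- Let u_1, …, u_K be i.i.d. copies of a random variable U with P(U > 1) = 1 and U not almost surely constant. Let c_1, …, c_K and d_1, …, d_K be real constants with c_i d_i > 0 for all i. Define P = Σ_i c_i u_i and Q = Σ_i d_i (1/u_i). Then Cov(P, Q) < 0. -/

import Mathlib

open MeasureTheory ProbabilityTheory Finset

/-- Key lemma: if `1 < X` a.e. and `X` has positive variance, then
`E[X] * E[X⁻¹] > 1`. -/
lemma mul_integral_inv_gt_one
    {Ω : Type*} [MeasurableSpace Ω] (μ : Measure Ω) [IsProbabilityMeasure μ]
    {X : Ω → ℝ}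
    (h_gt : ∀ᵐ ω ∂μ, 1 < X ω)
    (h_var : 0 < variance X μ)
    (h_int : Integrable X μ)
    (h_int_inv : Integrable (fun ω => (X ω)⁻¹) μ) :
    1 < (∫ ω, X ω ∂μ) * ∫ ω, (X ω)⁻¹ ∂μ := by
  set m : ℝ := ∫ ω, X ω ∂μ with hm
  have hm1 : 1 ≤ m := by
    have := integral_mono_ae (integrable_const (1 : ℝ)) h_int
      (h_gt.mono fun ω h => le_of_lt h)
    simpa using this
  have hm0 : 0 < m := lt_of_lt_of_le one_pos hm1
  set g : Ω → ℝ := fun ω => (X ω)⁻¹ - m⁻¹ + (X ω - m) / m ^ 2 with hg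
  have hg_int : Integrable g μ :=
    (h_int_inv.sub (integrable_const _)).add ((h_int.sub (integrable_const m)).div_const _)
  have key : ∀ x : ℝ, 1 < x → x⁻¹ - m⁻¹ + (x - m) / m ^ 2 = (x - m) ^ 2 / (x * m ^ 2) := by
    intro x hx
    have hx0 : x ≠ 0 := by linarith
    have hm0' : m ≠ 0 := hm0.ne'
    field_simp
    ring
  have hg_nonneg : ∀ᵐ ω ∂μ, 0 ≤ g ω := by
    filter_upwards [h_gt] with ω hω
    rw [hg]
    simp only
    rw [key _ hω]
    have hx0 : (0:ℝ) < X ω := lt_trans one_pos hω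
    positivity
  have hg_integral : ∫ ω, g ω ∂μ = (∫ ω, (X ω)⁻¹ ∂μ) - m⁻¹ := by
    have h1 : Integrable (fun ω => (X ω)⁻¹ - m⁻¹) μ := h_int_inv.sub (integrable_const _)
    have h2 : Integrable (fun ω => (X ω - m) / m ^ 2) μ :=
      (h_int.sub (integrable_const m)).div_const _
    have : ∫ ω, g ω ∂μ = (∫ ω, ((X ω)⁻¹ - m⁻¹) ∂μ) + ∫ ω, (X ω - m) / m ^ 2 ∂μ :=
      integral_add h1 h2
    rw [this, integral_sub h_int_inv (integrable_const _), integral_div,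
      integral_sub h_int (integrable_const m)]
    simp [← hm]
  have hpos : 0 < ∫ ω, g ω ∂μ := by
    rcases lt_or_eq_of_le (integral_nonneg_of_ae hg_nonneg) with h | h
    · exact h
    · exfalso
      have hzero : g =ᵐ[μ] 0 :=
        (integral_eq_zero_iff_of_nonneg_ae hg_nonneg hg_int).mp h.symm
      have hXm : X =ᵐ[μ] fun _ => m := by
        filter_upwards [hzero, h_gt] with ω h0 hω
        have hx0 : (0:ℝ) < X ω := lt_trans one_pos hω
        have : (X ω - m) ^ 2 / (X ω * m ^ 2) = 0 := by
          rw [← key _ hω]; simpa [hg] using h0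
        have hnum : (X ω - m) ^ 2 = 0 := by
          have hden : X ω * m ^ 2 ≠ 0 := by positivity
          exact (div_eq_zero_iff.mp this).resolve_right hden
        have := pow_eq_zero_iff (n := 2) (by norm_num) |>.mp hnum
        linarith [sub_eq_zero.mp this]
      have hev : evariance X μ = 0 := by
        rw [evariance_eq_zero_iff h_int.aemeasurable]
        exact hXm
      have : variance X μ = 0 := by
        rw [variance, hev]; simp
      exact absurd this h_var.ne'
  have hgt : m⁻¹ < ∫ ω, (X ω)⁻¹ ∂μ := by
    rw [hg_integral] at hpos; linarith
  calc 1 = m * m⁻¹ := (mul_inv_cancel₀ hm0.ne').symm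
    _ < m * ∫ ω, (X ω)⁻¹ ∂μ := by exact (mul_lt_mul_iff_right₀ hm0).mpr hgt

/-- If `u 1, …, u K` are i.i.d. copies of a random variable `U` with `P(U > 1) = 1`
and positive variance, and `c i * d i > 0` for all `i`, then with
`P = ∑ i, c i * u i` and `Q = ∑ i, d i / u i`, we have `Cov(P, Q) < 0`. -/
theorem cov_neg_of_iid
    {Ω : Type*} [MeasurableSpace Ω] (μ : Measure Ω) [IsProbabilityMeasure μ]
    (K : ℕ) (hK : 0 < K)
    (u : Fin K → Ω → ℝ)
    (h_indep : iIndepFun u μ)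
    (h_ident : ∀ i j, IdentDistrib (u i) (u j) μ μ)
    (h_meas : ∀ i, Measurable (u i))
    (h_gt : ∀ i, ∀ᵐ ω ∂μ, 1 < u i ω)
    (h_var : ∀ i, 0 < variance (u i) μ)
    (h_int : ∀ i, Integrable (u i) μ)
    (h_int_inv : ∀ i, Integrable (fun ω => (u i ω)⁻¹) μ)
    (h_int_prod : ∀ i j, Integrable (fun ω => u i ω * (u j ω)⁻¹) μ)
    (c d : Fin K → ℝ)
    (hcd : ∀ i, 0 < c i * d i)
    (P Q : Ω → ℝ)
    (hP : P = fun ω => ∑ i, c i * u i ω)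
    (hQ : Q = fun ω => ∑ i, d i * (u i ω)⁻¹) :
    (∫ ω, P ω * Q ω ∂μ) - (∫ ω, P ω ∂μ) * ∫ ω, Q ω ∂μ < 0 := by
  set M : Fin K → ℝ := fun i => ∫ ω, u i ω ∂μ with hM
  set N : Fin K → ℝ := fun i => ∫ ω, (u i ω)⁻¹ ∂μ with hN
  have hPint : (∫ ω, P ω ∂μ) = ∑ i, c i * M i := by
    rw [hP, integral_finset_sum _ (fun i _ => (h_int i).const_mul (c i))]
    exact sum_congr rfl fun i _ => integral_const_mul _ _
  have hQint : (∫ ω, Q ω ∂μ) = ∑ i, d i * N i := by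
    rw [hQ, integral_finset_sum _ (fun i _ => (h_int_inv i).const_mul (d i))]
    exact sum_congr rfl fun i _ => integral_const_mul _ _
  have hPQ : (∫ ω, P ω * Q ω ∂μ)
      = ∑ i, ∑ j, (c i * d j) * ∫ ω, u i ω * (u j ω)⁻¹ ∂μ := by
    rw [hP, hQ]
    have hexp : ∀ ω : Ω, (∑ i, c i * u i ω) * (∑ j, d j * (u j ω)⁻¹)
        = ∑ i, ∑ j, (c i * d j) * (u i ω * (u j ω)⁻¹) := by
      intro ω
      rw [Finset.sum_mul_sum]
      exact sum_congr rfl fun i _ => sum_congr rfl fun j _ => by ring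
    simp only [hexp]
    rw [integral_finset_sum _ (fun i _ =>
      integrable_finset_sum _ (fun j _ => (h_int_prod i j).const_mul _))]
    refine sum_congr rfl fun i _ => ?_
    rw [integral_finset_sum _ (fun j _ => (h_int_prod i j).const_mul _)]
    exact sum_congr rfl fun j _ => integral_const_mul _ _
  have hEdiag : ∀ i, (∫ ω, u i ω * (u i ω)⁻¹ ∂μ) = 1 := by
    intro i
    have : (fun ω => u i ω * (u i ω)⁻¹) =ᵐ[μ] fun _ => (1 : ℝ) := by
      filter_upwards [h_gt i] with ω hω
      exact mul_inv_cancel₀ (by linarith)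
    rw [integral_congr_ae this]
    simp
  have hEoff : ∀ i j, i ≠ j → (∫ ω, u i ω * (u j ω)⁻¹ ∂μ) = M i * N j := by
    intro i j hij
    have hind : IndepFun (u i) (fun ω => (u j ω)⁻¹) μ :=
      (h_indep.indepFun hij).comp measurable_id measurable_inv
    exact hind.integral_mul_eq_mul_integral (h_int i).aestronglyMeasurable (h_int_inv j).aestronglyMeasurable
  rw [hPQ, hPint, hQint, Finset.sum_mul_sum, ← Finset.sum_sub_distrib]
  have hterm : ∀ i : Fin K,
      (∑ j, (c i * d j) * ∫ ω, u i ω * (u j ω)⁻¹ ∂μ)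
        - ∑ j, (c i * M i) * (d j * N j)
      = c i * d i * (1 - M i * N i) := by
    intro i
    rw [← Finset.sum_sub_distrib]
    rw [Finset.sum_eq_single i]
    · rw [hEdiag i]; ring
    · intro j _ hji
      rw [hEoff i j (Ne.symm hji)]; ring
    · intro h; exact absurd (mem_univ i) h
  rw [Finset.sum_congr rfl fun i _ => hterm i]
  apply Finset.sum_neg
  · intro i _
    apply mul_neg_of_pos_of_neg (hcd i)
    have := mul_integral_inv_gt_one μ (h_gt i) (h_var i) (h_int i) (h_int_inv i)
    simp only [hM, hN]
    linarith
  · exact univ_nonempty_iff.mpr ⟨⟨0, hK⟩⟩
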